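/- Let N and q and p be natural numbers with q ≥ 1, and let v₁,…,v_q and w₁,…,w_p be vectors in ℝ^N such that v₁,…,v_q span ℝ^N. Then there exists a constant κ₀ > 0, depending only on the vectors v₁,…,v_q, with the following property: for every P ∈ ℝ^N, every R > 0 and all ε > ε' > 0, there exists Q ∈ 𝒫_{ε,R} such that for all Q' ∈ 𝒫_{ε',R} one has (Q' − Q)·P ≤ −κ₀ (ε − ε') |P|, where · denotes the Euclidean inner product and |P| the Euclidean norm. -/

import Mathlib

/-- The set 𝒫_{ε,R} built from the vectors `v` and `w`:
all sums `∑ s_j • v j + ∑ r_h • w h` with `s_j ∈ (−ε, 1+ε)` and `r_h ∈ (−R, R)`. -/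
def Pset {N q p : ℕ} (v : Fin q → EuclideanSpace ℝ (Fin N))
    (w : Fin p → EuclideanSpace ℝ (Fin N)) (ε R : ℝ) :
    Set (EuclideanSpace ℝ (Fin N)) :=
  {x | ∃ (s : Fin q → ℝ) (r : Fin p → ℝ),
    (∀ j, s j ∈ Set.Ioo (-ε) (1 + ε)) ∧ (∀ h, r h ∈ Set.Ioo (-R) R) ∧
    x = ∑ j, s j • v j + ∑ h, r h • w h}

/-- If `v` spans, the sum of `|⟨v j, P⟩|` dominates a positive multiple of `‖P‖`. -/
theorem norm_le_sum_abs_inner (N q : ℕ) (v : Fin q → EuclideanSpace ℝ (Fin N))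
    (hspan : Submodule.span ℝ (Set.range v) = ⊤) :
    ∃ c > (0:ℝ), ∀ P : EuclideanSpace ℝ (Fin N),
      c * ‖P‖ ≤ ∑ j, |(inner ℝ (v j) P : ℝ)| := by
  rcases Nat.eq_zero_or_pos N with hN | hN
  · refine ⟨1, one_pos, fun P => ?_⟩
    subst hN
    have : P = 0 := Subsingleton.elim P 0
    rw [this]
    simp only [norm_zero, mul_zero]
    exact Finset.sum_nonneg (fun j _ => abs_nonneg _)
  · set f : EuclideanSpace ℝ (Fin N) → ℝ := fun P => ∑ j, |(inner ℝ (v j) P : ℝ)| with hf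
    have hcont : Continuous f := by
      apply continuous_finset_sum
      intro j _
      exact (continuous_abs).comp (innerSL ℝ (v j)).continuous
    have hx0 : (EuclideanSpace.single (⟨0, hN⟩ : Fin N) (1:ℝ)) ∈ Metric.sphere (0 : EuclideanSpace ℝ (Fin N)) 1 := by
      simp [EuclideanSpace.norm_single]
    obtain ⟨x, hx, hmin⟩ := (isCompact_sphere (0 : EuclideanSpace ℝ (Fin N)) 1).exists_isMinOn
      ⟨_, hx0⟩ hcont.continuousOn
    have hxnorm : ‖x‖ = 1 := by simpa using hx
    have hfpos : 0 < f x := by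
      rcases lt_or_eq_of_le (Finset.sum_nonneg (fun j (_ : j ∈ Finset.univ) => abs_nonneg ((inner ℝ (v j) x : ℝ)))) with h | h
      · exact h
      · exfalso
        have hz : ∀ j, (inner ℝ (v j) x : ℝ) = 0 := by
          intro j
          have h0 : ∑ i : Fin q, |(inner ℝ (v i) x : ℝ)| = 0 := h.symm
          have := (Finset.sum_eq_zero_iff_of_nonneg (fun i (_ : i ∈ Finset.univ) => abs_nonneg ((inner ℝ (v i) x : ℝ)))).1 h0 j (Finset.mem_univ j)
          exact abs_eq_zero.1 this
        have : ∀ y ∈ Submodule.span ℝ (Set.range v), (inner ℝ y x : ℝ) = 0 := by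
          intro y hy
          induction hy using Submodule.span_induction with
          | mem y hy => obtain ⟨j, rfl⟩ := hy; exact hz j
          | zero => simp
          | add a b _ _ ha hb => rw [inner_add_left, ha, hb]; ring
          | smul r a _ ha => rw [real_inner_smul_left, ha]; ring
        have hxx : (inner ℝ x x : ℝ) = 0 := this x (by rw [hspan]; trivial)
        have : x = 0 := inner_self_eq_zero.1 hxx
        rw [this] at hxnorm; simp at hxnorm
    refine ⟨f x, hfpos, fun P => ?_⟩
    rcases eq_or_ne P 0 with rfl | hP
    · simp [hf]
    · have ht : (0:ℝ) < ‖P‖ := norm_pos_iff.2 hP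
      have hmem : ‖P‖⁻¹ • P ∈ Metric.sphere (0 : EuclideanSpace ℝ (Fin N)) 1 := by
        simp [norm_smul, abs_of_pos ht, inv_mul_cancel₀ ht.ne']
      have h2 : f x ≤ f (‖P‖⁻¹ • P) := hmin hmem
      have hhom : f (‖P‖⁻¹ • P) = ‖P‖⁻¹ * f P := by
        rw [hf]
        simp only [real_inner_smul_right, abs_mul, abs_of_pos (inv_pos.2 ht)]
        rw [Finset.mul_sum]
      rw [hhom] at h2
      show f x * ‖P‖ ≤ f P
      calc f x * ‖P‖ ≤ (‖P‖⁻¹ * f P) * ‖P‖ := by nlinarith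
        _ = f P := by field_simp

private lemma dist_lemma_arith (c ε ε' δ A' A B' B V Wv n : ℝ)
    (hεε : ε' < ε)
    (k1 : A' - A ≤ -((ε - ε') / 2) * V) (k2 : B' - B ≤ δ * Wv)
    (k3 : δ * Wv ≤ (ε - ε') * c * n / 4) (k4 : c * n ≤ V) :
    (A' + B') - (A + B) ≤ -(c / 4) * (ε - ε') * n := by
  nlinarith [mul_nonneg (show (0:ℝ) ≤ ε - ε' by linarith)
    (show (0:ℝ) ≤ V - c * n by linarith)]

/-- The distance lemma: there is `κ₀ > 0`, depending only on `v`, such that for every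
`P`, every `R > 0` and all `ε > ε' > 0`, there is `Q ∈ 𝒫_{ε,R}` with
`(Q' − Q)·P ≤ −κ₀ (ε − ε') |P|` for all `Q' ∈ 𝒫_{ε',R}`. -/
theorem dist_lemma (N q p : ℕ) (hq : 1 ≤ q)
    (v : Fin q → EuclideanSpace ℝ (Fin N)) (w : Fin p → EuclideanSpace ℝ (Fin N))
    (hspan : Submodule.span ℝ (Set.range v) = ⊤) :
    ∃ κ₀ > (0 : ℝ), ∀ (P : EuclideanSpace ℝ (Fin N)) (R ε ε' : ℝ),
      0 < R → 0 < ε' → ε' < ε →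
      ∃ Q ∈ Pset v w ε R, ∀ Q' ∈ Pset v w ε' R,
        (inner ℝ (Q' - Q) P : ℝ) ≤ -κ₀ * (ε - ε') * ‖P‖ := by
  obtain ⟨c, hc, hcP⟩ := norm_le_sum_abs_inner N q v hspan
  refine ⟨c / 4, by positivity, ?_⟩
  intro P R ε ε' hR hε' hεε
  have hε : 0 < ε := hε'.trans hεε
  by_cases hP : P = 0
  · subst hP
    refine ⟨∑ j, ((1:ℝ)/2) • v j + ∑ h : Fin p, (0:ℝ) • w h,
      ⟨fun _ => (1:ℝ)/2, fun _ => 0,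
        fun j => ⟨by norm_num; linarith, by norm_num; linarith⟩, fun h => ⟨by simpa using hR, by simpa using hR⟩, rfl⟩, ?_⟩
    intro Q' _
    simp
  · have hPn : 0 < ‖P‖ := norm_pos_iff.2 hP
    set W : ℝ := ∑ h, |(inner ℝ (w h) P : ℝ)| with hWdef
    have hW0 : 0 ≤ W := Finset.sum_nonneg fun _ _ => abs_nonneg _
    obtain ⟨δ, hδ0, hδR, hδW⟩ : ∃ δ : ℝ, 0 < δ ∧ δ ≤ R / 2 ∧ δ * W ≤ (ε - ε') * c * ‖P‖ / 4 := by
      refine ⟨min (R / 2) ((ε - ε') * c * ‖P‖ / (4 * (W + 1))),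
        lt_min (by linarith) (div_pos (mul_pos (mul_pos (by linarith) hc) hPn) (by linarith)),
        min_le_left _ _, ?_⟩
      have h1 : min (R / 2) ((ε - ε') * c * ‖P‖ / (4 * (W + 1)))
          ≤ (ε - ε') * c * ‖P‖ / (4 * (W + 1)) := min_le_right _ _
      have h2 : min (R / 2) ((ε - ε') * c * ‖P‖ / (4 * (W + 1))) * W
          ≤ ((ε - ε') * c * ‖P‖ / (4 * (W + 1))) * W :=
        mul_le_mul_of_nonneg_right h1 hW0
      have h3 : ((ε - ε') * c * ‖P‖ / (4 * (W + 1))) * W ≤ (ε - ε') * c * ‖P‖ / 4 := by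
        rw [div_mul_eq_mul_div, div_le_div_iff₀ (by linarith) (by norm_num)]
        have hnn : 0 ≤ (ε - ε') * c * ‖P‖ :=
          mul_nonneg (mul_nonneg (by linarith) hc.le) hPn.le
        nlinarith
      linarith
    set s : Fin q → ℝ := fun j => if 0 ≤ (inner ℝ (v j) P : ℝ) then 1 + (ε + ε') / 2 else -((ε + ε') / 2) with hsdef
    set r : Fin p → ℝ := fun h => if 0 ≤ (inner ℝ (w h) P : ℝ) then R - δ else -(R - δ) with hrdef
    refine ⟨∑ j, s j • v j + ∑ h, r h • w h, ⟨s, r, fun j => ?_, fun h => ?_, rfl⟩, ?_⟩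
    · simp only [hsdef, Set.mem_Ioo]
      split <;> constructor <;> linarith
    · simp only [hrdef, Set.mem_Ioo]
      split <;> constructor <;> linarith
    · rintro Q' ⟨s', r', hs', hr', rfl⟩
      have expand : ∀ (a : Fin q → ℝ) (b : Fin p → ℝ),
          (inner ℝ (∑ j, a j • v j + ∑ h, b h • w h) P : ℝ)
            = ∑ j, a j * inner ℝ (v j) P + ∑ h, b h * inner ℝ (w h) P := by
        intro a b
        rw [inner_add_left, sum_inner, sum_inner]
        simp only [real_inner_smul_left]
      rw [inner_sub_left, expand, expand]
      have hv : ∀ j, s' j * (inner ℝ (v j) P : ℝ) - s j * (inner ℝ (v j) P : ℝ)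
          ≤ -((ε - ε') / 2) * |(inner ℝ (v j) P : ℝ)| := by
        intro j
        obtain ⟨h1, h2⟩ := hs' j
        simp only [hsdef]
        rcases le_or_gt 0 ((inner ℝ (v j) P : ℝ)) with h | h
        · rw [if_pos h, abs_of_nonneg h]; nlinarith
        · rw [if_neg (not_le.2 h), abs_of_neg h]; nlinarith
      have hw : ∀ h, r' h * (inner ℝ (w h) P : ℝ) - r h * (inner ℝ (w h) P : ℝ)
          ≤ δ * |(inner ℝ (w h) P : ℝ)| := by
        intro h
        obtain ⟨h1, h2⟩ := hr' h
        simp only [hrdef]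
        rcases le_or_gt 0 ((inner ℝ (w h) P : ℝ)) with hh | hh
        · rw [if_pos hh, abs_of_nonneg hh]; nlinarith
        · rw [if_neg (not_le.2 hh), abs_of_neg hh]; nlinarith
      have key1 : (∑ j, s' j * (inner ℝ (v j) P : ℝ)) - ∑ j, s j * (inner ℝ (v j) P : ℝ)
          ≤ -((ε - ε') / 2) * ∑ j, |(inner ℝ (v j) P : ℝ)| := by
        rw [← Finset.sum_sub_distrib, Finset.mul_sum]
        exact Finset.sum_le_sum fun j _ => hv j
      have key2 : (∑ h, r' h * (inner ℝ (w h) P : ℝ)) - ∑ h, r h * (inner ℝ (w h) P : ℝ)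
          ≤ δ * W := by
        rw [← Finset.sum_sub_distrib, hWdef, Finset.mul_sum]
        exact Finset.sum_le_sum fun h _ => hw h
      exact dist_lemma_arith c ε ε' δ _ _ _ _ _ _ _ hεε key1 key2 hδW (hcP P)
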